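/- Let C be a real n×n matrix all of whose complex eigenvalues λ satisfy |λ| < 1, and let S be a symmetric positive semidefinite real n×n matrix. Then the series Σ_{t=0}^∞ (Cᵀ)ᵗ S Cᵗ converges, and its sum P is a symmetric positive semidefinite matrix satisfying the discrete-time Lyapunov equation P = S + Cᵀ P C. -/

import Mathlib

open Matrix Filter
open scoped NNReal ENNReal

section aux
attribute [local instance] Matrix.linftyOpNormedRing Matrix.linftyOpNormedAlgebra

lemma aux_entry_le {n : ℕ} (M : Matrix (Fin n) (Fin n) ℂ) (i j : Fin n) :
    ‖M i j‖ ≤ ‖M‖ := by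
  have h : ‖M i j‖₊ ≤ ‖M‖₊ := by
    rw [Matrix.linfty_opNNNorm_def]
    refine le_trans ?_ (Finset.le_sup (f := fun i => ∑ j, ‖M i j‖₊) (Finset.mem_univ i))
    exact Finset.single_le_sum (f := fun j => ‖M i j‖₊) (fun _ _ => zero_le)
      (Finset.mem_univ j)
  exact_mod_cast h

lemma aux_pow_bound {n : ℕ} (hn : 0 < n) (A : Matrix (Fin n) (Fin n) ℂ)
    (h : ∀ z ∈ spectrum ℂ A, ‖z‖₊ < 1) :
    ∃ r : ℝ, 0 ≤ r ∧ r < 1 ∧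
      ∀ᶠ t : ℕ in atTop, ∀ i j, ‖(A ^ t) i j‖ ≤ r ^ t := by
  haveI : Nontrivial (Matrix (Fin n) (Fin n) ℂ) := by
    refine ⟨0, 1, fun hc => ?_⟩
    have := congrFun (congrFun hc ⟨0, hn⟩) ⟨0, hn⟩
    simp [Matrix.one_apply] at this
  have hρ : spectralRadius ℂ A < (1 : ℝ≥0) :=
    spectrum.spectralRadius_lt_of_forall_lt A h
  obtain ⟨r, hρr, hr1⟩ := ENNReal.lt_iff_exists_nnreal_btwn.mp hρ
  have hr1' : r < 1 := by exact_mod_cast hr1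
  have hgel := spectrum.pow_nnnorm_pow_one_div_tendsto_nhds_spectralRadius A
  have hev : ∀ᶠ t : ℕ in atTop, ((‖A ^ t‖₊ : ℝ≥0∞)) ^ (1 / (t : ℝ)) < (r : ℝ≥0∞) :=
    hgel.eventually_lt_const hρr
  refine ⟨r, r.coe_nonneg, by exact_mod_cast hr1', ?_⟩
  filter_upwards [hev, eventually_ge_atTop 1] with t ht ht1 i j
  have ht0 : (t : ℝ) ≠ 0 := by positivity
  have hlt : (‖A ^ t‖₊ : ℝ≥0∞) < (r : ℝ≥0∞) ^ (t : ℝ) := by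
    have := ENNReal.rpow_lt_rpow ht (by positivity : (0 : ℝ) < (t : ℝ))
    rwa [← ENNReal.rpow_mul, one_div_mul_cancel ht0, ENNReal.rpow_one] at this
  have hlt' : ‖A ^ t‖₊ < r ^ t := by
    rw [ENNReal.rpow_natCast, ← ENNReal.coe_pow, ENNReal.coe_lt_coe] at hlt
    exact hlt
  have hle : ‖A ^ t‖ ≤ (r : ℝ) ^ t := by
    have := hlt'.le
    exact_mod_cast this
  exact le_trans (aux_entry_le _ i j) hle

end aux

/-- If `C` is stable (all complex eigenvalues have modulus `< 1`) and `S ⪰ 0`,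
then the series `Σₜ (Cᵀ)ᵗ S Cᵗ` converges to a symmetric positive semidefinite
matrix `P` satisfying the discrete-time Lyapunov equation `P = S + Cᵀ P C`. -/
theorem lyapunov_series_solution {n : ℕ} (hn : 0 < n)
    (C S : Matrix (Fin n) (Fin n) ℝ)
    (hstable : ∀ (lam : ℂ) (v : Fin n → ℂ), v ≠ 0 →
      (C.map (fun x : ℝ => (x : ℂ))).mulVec v = lam • v → ‖lam‖ < 1)
    (hS : S.PosSemidef) :
    ∃ P : Matrix (Fin n) (Fin n) ℝ,
      HasSum (fun t : ℕ => (Cᵀ) ^ t * S * C ^ t) P ∧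
      P.PosSemidef ∧ P = S + Cᵀ * P * C := by
  classical
  set f : ℕ → Matrix (Fin n) (Fin n) ℝ := fun t => (Cᵀ) ^ t * S * C ^ t with hf
  set A : Matrix (Fin n) (Fin n) ℂ := Complex.ofRealHom.mapMatrix C with hA
  -- spectrum bound
  have hspec : ∀ z ∈ spectrum ℂ A, ‖z‖₊ < 1 := by
    intro z hz
    rw [spectrum.mem_iff] at hz
    have hdet : (algebraMap ℂ (Matrix (Fin n) (Fin n) ℂ) z - A).det = 0 := by
      by_contra hd
      exact hz ((Matrix.isUnit_iff_isUnit_det _).mpr (isUnit_iff_ne_zero.mpr hd))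
    obtain ⟨v, hv0, hv⟩ := (Matrix.exists_mulVec_eq_zero_iff).mpr hdet
    have hAv : A.mulVec v = z • v := by
      rw [Matrix.sub_mulVec, sub_eq_zero] at hv
      have h1 : (algebraMap ℂ (Matrix (Fin n) (Fin n) ℂ) z).mulVec v = z • v := by
        funext i
        simp [Matrix.algebraMap_eq_diagonal, Matrix.mulVec_diagonal]
      rw [← hv, h1]
    have habs := hstable z v hv0 hAv
    exact_mod_cast habs
  obtain ⟨r, hr0, hr1, hev⟩ := aux_pow_bound hn A hspec
  -- entry bound for real powers
  have hmap : ∀ t : ℕ, A ^ t = (Complex.ofRealHom.mapMatrix (C ^ t) :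
      Matrix (Fin n) (Fin n) ℂ) := by
    intro t
    rw [hA, ← map_pow]
  have hent : ∀ᶠ t : ℕ in atTop, ∀ i j, |(C ^ t) i j| ≤ r ^ t := by
    filter_upwards [hev] with t ht i j
    have := ht i j
    rw [hmap t] at this
    simpa [RingHom.mapMatrix_apply, Matrix.map_apply] using this
  -- entrywise summability
  set K : ℝ := ∑ k, ∑ l, |S k l| with hK
  have hK0 : 0 ≤ K := Finset.sum_nonneg fun _ _ => Finset.sum_nonneg fun _ _ => abs_nonneg _
  have hbound : ∀ᶠ t : ℕ in atTop, ∀ i j, |f t i j| ≤ K * (r ^ 2) ^ t := by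
    filter_upwards [hent] with t ht i j
    have hfij : f t i j = ∑ l, (∑ k, (C ^ t) k i * S k l) * (C ^ t) l j := by
      simp [hf, Matrix.mul_apply, ← Matrix.transpose_pow, Matrix.transpose_apply]
    rw [hfij]
    calc |∑ l, (∑ k, (C ^ t) k i * S k l) * (C ^ t) l j|
        ≤ ∑ l, |(∑ k, (C ^ t) k i * S k l) * (C ^ t) l j| :=
          Finset.abs_sum_le_sum_abs _ _
      _ ≤ ∑ l, (∑ k, |S k l| * r ^ t) * r ^ t := by
          refine Finset.sum_le_sum fun l _ => ?_
          rw [abs_mul]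
          refine mul_le_mul ?_ (ht _ _) (abs_nonneg _)
            (Finset.sum_nonneg fun _ _ => mul_nonneg (abs_nonneg _) (by positivity))
          refine le_trans (Finset.abs_sum_le_sum_abs _ _) ?_
          refine Finset.sum_le_sum fun k _ => ?_
          rw [abs_mul, mul_comm (|(C ^ t) k i|)]
          exact mul_le_mul_of_nonneg_left (ht _ _) (abs_nonneg _)
      _ = (∑ l, ∑ k, |S k l|) * (r ^ t * r ^ t) := by
          simp only [Finset.sum_mul, mul_assoc]
      _ = K * (r ^ 2) ^ t := by
          rw [hK, Finset.sum_comm, ← pow_add, ← two_mul, pow_mul]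
  have hgeo : Summable (fun t : ℕ => K * (r ^ 2) ^ t) :=
    (summable_geometric_of_lt_one (by positivity) (by nlinarith)).mul_left K
  have hsum_entry : ∀ i j, Summable fun t => f t i j := by
    intro i j
    refine Summable.of_norm_bounded_eventually hgeo ?_
    rw [Nat.cofinite_eq_atTop]
    filter_upwards [hbound] with t ht
    simpa [Real.norm_eq_abs] using ht i j
  have hsum : Summable f :=
    Pi.summable.mpr fun i => Pi.summable.mpr fun j => hsum_entry i j
  set P : Matrix (Fin n) (Fin n) ℝ := ∑' t, f t with hPdef
  have hP : HasSum f P := hsum.hasSum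
  -- symmetry of S
  have hSsymm : Sᵀ = S := by
    rw [← Matrix.conjTranspose_eq_transpose_of_trivial]
    exact hS.1
  have hfsymm : ∀ t, (f t)ᵀ = f t := by
    intro t
    simp [hf, Matrix.transpose_mul, Matrix.transpose_pow, Matrix.transpose_transpose,
      hSsymm, mul_assoc]
  have hPsymm : Pᵀ = P := by
    have h1 : HasSum (fun t => (f t)ᵀ) Pᵀ := hP.matrix_transpose
    have h2 : HasSum f Pᵀ := by simpa [hfsymm] using h1
    exact h2.unique hP
  -- each term is PSD
  have hterm : ∀ t, (f t).PosSemidef := by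
    intro t
    have := hS.conjTranspose_mul_mul_same (B := C ^ t)
    rwa [Matrix.conjTranspose_eq_transpose_of_trivial, Matrix.transpose_pow] at this
  -- P is PSD
  have hPpsd : P.PosSemidef := by
    rw [Matrix.posSemidef_iff_dotProduct_mulVec]
    constructor
    · show Pᴴ = P
      rwa [Matrix.conjTranspose_eq_transpose_of_trivial]
    · intro x
      have hcont : Continuous fun M : Matrix (Fin n) (Fin n) ℝ => star x ⬝ᵥ M *ᵥ x :=
        continuous_const.dotProduct (continuous_id.matrix_mulVec continuous_const)
      have hq : HasSum (fun t => star x ⬝ᵥ (f t) *ᵥ x) (star x ⬝ᵥ P *ᵥ x) :=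
        hP.map (AddMonoidHom.mk' (fun M : Matrix (Fin n) (Fin n) ℝ => star x ⬝ᵥ M *ᵥ x)
          (fun a b => by simp [Matrix.add_mulVec, dotProduct_add])) hcont
      exact hasSum_le (fun t => (hterm t).dotProduct_mulVec_nonneg x) hasSum_zero hq
  -- Lyapunov equation
  have hcontφ : Continuous fun M : Matrix (Fin n) (Fin n) ℝ => Cᵀ * M * C :=
    (continuous_const.matrix_mul continuous_id).matrix_mul continuous_const
  have hφ : HasSum (fun t => Cᵀ * f t * C) (Cᵀ * P * C) :=
    hP.map (AddMonoidHom.mk' (fun M : Matrix (Fin n) (Fin n) ℝ => Cᵀ * M * C)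
      (fun a b => by simp [mul_add, add_mul])) hcontφ
  have hshift : ∀ t, Cᵀ * f t * C = f (t + 1) := by
    intro t
    show Cᵀ * ((Cᵀ) ^ t * S * C ^ t) * C = (Cᵀ) ^ (t + 1) * S * C ^ (t + 1)
    rw [pow_succ C t, pow_succ' (Cᵀ) t]
    noncomm_ring
  have hφ' : HasSum (fun t => f (t + 1)) (Cᵀ * P * C) := by simpa [hshift] using hφ
  have htail : HasSum (fun t => f (t + 1)) (P - S) := by
    have := (hasSum_nat_add_iff' (f := f) 1).mpr hP
    simpa [hf] using this
  have heq : Cᵀ * P * C = P - S := hφ'.unique htail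
  refine ⟨P, hP, hPpsd, ?_⟩
  rw [heq]
  rw [add_sub_cancel]
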